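/- The Laplace transform of x^{β-1} E_{α,β}(-λ x^α) satisfies ∫₀^∞ e^{-s x} x^{β-1} E_{α,β}(-λ x^α) dx = s^{α-β}/(λ + s^α) for real s > 0 sufficiently large, where 0 < α < 1, β > 0, λ > 0. -/

import Mathlib

/-- The two-parameter Mittag-Leffler function `E_{α,β}(x) = ∑ x^k / Γ(αk+β)`. -/
noncomputable def mittagLeffler2 (α β x : ℝ) : ℝ :=
  ∑' k : ℕ, x ^ k / Real.Gamma (α * k + β)

open MeasureTheory Set Real

theorem laplace_transform_mittagLeffler2 (α β lam : ℝ)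
    (hα : 0 < α) (hα1 : α < 1) (hβ : 0 < β) (hlam : 0 < lam) :
    ∃ s₀ > (0 : ℝ), ∀ s > s₀,
      ∫ x in Set.Ioi (0 : ℝ),
          Real.exp (-(s * x)) * (x ^ (β - 1) * mittagLeffler2 α β (-(lam * x ^ α))) =
        s ^ (α - β) / (lam + s ^ α) := by
  refine ⟨max 1 (lam ^ (1/α)), lt_of_lt_of_le one_pos (le_max_left _ _), fun s hs => ?_⟩
  have hs1 : 1 < s := lt_of_le_of_lt (le_max_left _ _) hs
  have hs0 : 0 < s := zero_lt_one.trans hs1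
  have hsα : lam < s ^ α := by
    have h1 : lam ^ (1/α) < s := lt_of_le_of_lt (le_max_right _ _) hs
    have h2 : (lam ^ (1/α)) ^ α = lam := by
      rw [← Real.rpow_mul hlam.le, one_div_mul_cancel hα.ne', Real.rpow_one]
    calc lam = (lam ^ (1/α)) ^ α := h2.symm
    _ < s ^ α := Real.rpow_lt_rpow (Real.rpow_nonneg hlam.le _) h1 hα
  have hsa0 : (0:ℝ) < s ^ α := Real.rpow_pos_of_pos hs0 _
  set F : ℕ → ℝ → ℝ := fun k x =>
    Real.exp (-(s * x)) * (x ^ (β - 1) * ((-(lam * x ^ α)) ^ k / Real.Gamma (α * k + β)))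
    with hFdef
  have hck : ∀ k : ℕ, (0:ℝ) < α * k + β := fun k => by positivity
  -- pointwise identity with the tsum of F
  have key : ∀ x : ℝ, Real.exp (-(s * x)) * (x ^ (β - 1) * mittagLeffler2 α β (-(lam * x ^ α)))
      = ∑' k : ℕ, F k x := fun x => by
    simp only [hFdef, mittagLeffler2, div_eq_mul_inv, tsum_mul_left]
  -- F on Ioi 0 in closed form
  have hF : ∀ (k : ℕ), ∀ x ∈ Ioi (0:ℝ), F k x =
      ((-lam) ^ k / Real.Gamma (α * k + β)) * (x ^ (α * k + β - 1) * Real.exp (-(s * x))) := by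
    intro k x hx
    have hx0 : (0:ℝ) < x := hx
    have h1 : (-(lam * x ^ α)) ^ k = (-lam) ^ k * x ^ (α * k) := by
      rw [show -(lam * x ^ α) = (-lam) * x ^ α by ring, mul_pow,
        ← Real.rpow_natCast (x ^ α) k, ← Real.rpow_mul hx0.le]
    have h2 : x ^ (α * k + β - 1) = x ^ (α * (k:ℝ)) * x ^ (β - 1) := by
      rw [← Real.rpow_add hx0]; ring_nf
    rw [hFdef]
    simp only [h1, h2]
    ring
  -- integrability of the model functions
  have hint : ∀ (c : ℝ), 0 < c →
      IntegrableOn (fun x : ℝ => x ^ (c - 1) * Real.exp (-(s * x))) (Ioi 0) := by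
    intro c hc
    have := integrableOn_rpow_mul_exp_neg_mul_rpow (p := 1) (s := c - 1) (b := s)
      (by linarith) one_pos hs0
    simpa [Real.rpow_one, neg_mul] using this
  have hFint : ∀ k : ℕ, IntegrableOn (F k) (Ioi 0) := fun k => by
    exact MeasureTheory.IntegrableOn.congr_fun
      ((hint _ (hck k)).const_mul ((-lam) ^ k / Real.Gamma (α * k + β)))
      (fun x hx => (hF k x hx).symm) measurableSet_Ioi
  -- the norm integrals
  have hΓpos : ∀ k : ℕ, 0 < Real.Gamma (α * k + β) := fun k => Real.Gamma_pos_of_pos (hck k)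
  have hnorm : ∀ k : ℕ, ∫ x in Ioi (0:ℝ), ‖F k x‖ = lam ^ k * (1/s) ^ (α * k + β) := by
    intro k
    have : ∀ x ∈ Ioi (0:ℝ), ‖F k x‖ =
        (lam ^ k / Real.Gamma (α * k + β)) * (x ^ (α * k + β - 1) * Real.exp (-(s * x))) := by
      intro x hx
      have hx0 : (0:ℝ) < x := hx
      rw [hF k x hx, Real.norm_eq_abs, abs_mul, abs_div, abs_pow, abs_neg,
        abs_of_pos hlam, abs_of_pos (hΓpos k), abs_of_pos (by positivity)]
    rw [setIntegral_congr_fun measurableSet_Ioi this, integral_const_mul,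
      integral_rpow_mul_exp_neg_mul_Ioi (hck k) hs0]
    field_simp
  -- geometric structure of the coefficients
  have hpow : ∀ k : ℕ, (1/s) ^ (α * k + β) = (1/s) ^ β * ((1/s) ^ α) ^ k := by
    intro k
    rw [Real.rpow_add (by positivity), ← Real.rpow_natCast ((1/s) ^ α) k,
      ← Real.rpow_mul (by positivity), mul_comm]
  have hratio : lam * (1/s) ^ α = lam / s ^ α := by
    rw [one_div, Real.inv_rpow hs0.le, div_eq_mul_inv]
  have hrlt : lam / s ^ α < 1 := (div_lt_one hsa0).mpr hsα
  have hr0 : 0 ≤ lam / s ^ α := by positivity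
  have hsum : Summable fun k : ℕ => ∫ x in Ioi (0:ℝ), ‖F k x‖ := by
    apply Summable.congr (f := fun k : ℕ => (1/s) ^ β * (lam / s ^ α) ^ k)
    · exact (summable_geometric_of_lt_one hr0 hrlt).mul_left _
    · intro k
      rw [hnorm k, hpow k, ← hratio, mul_pow]
      ring
  -- interchange sum and integral
  have hHS := hasSum_integral_of_summable_integral_norm
    (μ := volume.restrict (Ioi (0:ℝ))) hFint hsum
  have hIeq : (∫ x in Ioi (0:ℝ),
      Real.exp (-(s * x)) * (x ^ (β - 1) * mittagLeffler2 α β (-(lam * x ^ α))))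
      = ∑' k : ℕ, ∫ x in Ioi (0:ℝ), F k x := by
    rw [hHS.tsum_eq]
    exact integral_congr_ae (Filter.Eventually.of_forall fun x => key x)
  -- compute each integral
  have hIk : ∀ k : ℕ, (∫ x in Ioi (0:ℝ), F k x)
      = (1/s) ^ β * (-(lam / s ^ α)) ^ k := by
    intro k
    rw [setIntegral_congr_fun measurableSet_Ioi (hF k), integral_const_mul,
      integral_rpow_mul_exp_neg_mul_Ioi (hck k) hs0, hpow k]
    have : (-(lam / s ^ α)) ^ k = (-lam) ^ k * ((1/s) ^ α) ^ k := by
      rw [← mul_pow, ← hratio]; ring_nf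
    rw [this]
    field_simp
  rw [hIeq]
  simp only [hIk]
  rw [tsum_mul_left, tsum_geometric_of_norm_lt_one (by
    rw [norm_neg, Real.norm_eq_abs, abs_of_nonneg hr0]; exact hrlt)]
  have hβs : (0:ℝ) < s ^ β := Real.rpow_pos_of_pos hs0 _
  have h1 : (1/s) ^ β = (s ^ β)⁻¹ := by rw [one_div, Real.inv_rpow hs0.le]
  have h2 : s ^ (α - β) = s ^ α / s ^ β := Real.rpow_sub hs0 _ _
  have hden : (0:ℝ) < lam + s ^ α := by positivity
  have h3 : 1 + lam / s ^ α = (lam + s ^ α) / s ^ α := by field_simp; ring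
  rw [h1, h2, sub_neg_eq_add, h3, inv_div,
    inv_mul_eq_div, div_div, div_div, mul_comm (lam + s ^ α)]
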